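/- Let L > 0, Λ ≥ 0 and δ ≥ 1 be real numbers, let x_k, y, x̃, e ∈ H, suppose F(x_k) and F(x̃) are finite, let p := p_L(y) satisfy F(p) ≤ Q_L(p, y), set x' := p + e, and suppose F(x') is finite with F(x') − F(p) ≤ Λ‖e‖. Then, with v := F(x_k) − F(x̃) and v' := F(x') − F(x̃), one has (2/L)(δ(δ−1)v − δ²v') + 2δ²‖e‖(Λ/L + ‖x' − ((δ−1)/δ)x_k − (1/δ)x̃‖) ≥ ‖δx' − ((δ−1)x_k + x̃)‖² − ‖δy − ((δ−1)x_k + x̃)‖². -/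

import Mathlib

open scoped RealInnerProductSpace

set_option maxHeartbeats 1000000 in
/-- The main per-step inequality of the perturbed FISTA analysis (Step 1–2 of the proof of
the convergence theorem), combining the key inequality at `x_k` and at `x̃` with weights
`γ = δ − 1` and the Lipschitz bound `F(x') − F(p) ≤ Λ‖e‖` on the perturbation. -/
theorem perturbed_fista_step_inequality
    {H : Type*} [NormedAddCommGroup H] [InnerProductSpace ℝ H] [CompleteSpace H]
    (f : H → ℝ) (f' : H → H) (g : H → EReal) (Lf : ℝ) (hLf : 0 ≤ Lf)
    (hfconv : ConvexOn ℝ Set.univ f)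
    (hdiff : ∀ x : H, HasGradientAt f (f' x) x)
    (hlip : ∀ x y : H, ‖f' x - f' y‖ ≤ Lf * ‖x - y‖)
    (hgbot : ∀ x : H, g x ≠ ⊥) (hgproper : ∃ x : H, g x ≠ ⊤)
    (hgconv : ∀ x y : H, ∀ a b : ℝ, 0 ≤ a → 0 ≤ b → a + b = 1 →
      g (a • x + b • y) ≤ (a : EReal) * g x + (b : EReal) * g y)
    (hglsc : LowerSemicontinuous g)
    (L Λ δ : ℝ) (hL : 0 < L) (hΛ : 0 ≤ Λ) (hδ : 1 ≤ δ)
    (xk y xt e p x' : H)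
    (Fxk Fxt Fx' Fp : ℝ)
    (hFxk : (f xk : EReal) + g xk = (Fxk : EReal))
    (hFxt : (f xt : EReal) + g xt = (Fxt : EReal))
    (hpmin : ∀ x : H,
      ((f y + ⟪f' y, p - y⟫ + (L / 2) * ‖p - y‖ ^ 2 : ℝ) : EReal) + g p ≤
        ((f y + ⟪f' y, x - y⟫ + (L / 2) * ‖x - y‖ ^ 2 : ℝ) : EReal) + g x)
    (hFQ : (f p : EReal) + g p ≤
      ((f y + ⟪f' y, p - y⟫ + (L / 2) * ‖p - y‖ ^ 2 : ℝ) : EReal) + g p)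
    (hFp : (f p : EReal) + g p = (Fp : EReal))
    (hx' : x' = p + e)
    (hFx' : (f x' : EReal) + g x' = (Fx' : EReal))
    (hFe : Fx' - Fp ≤ Λ * ‖e‖) :
    (2 / L) * (δ * (δ - 1) * (Fxk - Fxt) - δ ^ 2 * (Fx' - Fxt)) +
        2 * δ ^ 2 * ‖e‖ * (Λ / L + ‖x' - ((δ - 1) / δ) • xk - (1 / δ) • xt‖) ≥
      ‖δ • x' - ((δ - 1) • xk + xt)‖ ^ 2 - ‖δ • y - ((δ - 1) • xk + xt)‖ ^ 2 := by
  have hδ0 : (0:ℝ) < δ := lt_of_lt_of_le one_pos hδ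
  -- extract real values of g at the relevant points
  have hget : ∀ (a : H) (Fa : ℝ), (f a : EReal) + g a = (Fa : EReal) →
      ∃ Ga : ℝ, g a = (Ga : EReal) ∧ f a + Ga = Fa := by
    intro a Fa h
    have htop : g a ≠ ⊤ := by
      intro ht
      rw [ht] at h
      rw [EReal.add_top_of_ne_bot (EReal.coe_ne_bot _)] at h
      exact (EReal.coe_ne_top Fa) h.symm
    lift g a to ℝ using ⟨htop, hgbot a⟩ with Ga hGa
    exact ⟨Ga, rfl, by exact_mod_cast h⟩
  obtain ⟨Gk, hGk, hGk'⟩ := hget xk Fxk hFxk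
  obtain ⟨Gt, hGt, hGt'⟩ := hget xt Fxt hFxt
  obtain ⟨Gp, hGp, hGp'⟩ := hget p Fp hFp
  -- gradient inequality for convex f
  have grad : ∀ x : H, f y + ⟪f' y, x - y⟫ ≤ f x := by
    intro x
    have hF : HasFDerivAt f ((InnerProductSpace.toDual ℝ H) (f' y)) y :=
      (hdiff y).hasFDerivAt
    have hline : HasDerivAt (fun t : ℝ => y + t • (x - y)) (x - y) 0 := by
      simpa using ((hasDerivAt_id (0:ℝ)).smul_const (x - y)).const_add y
    have h0 : y + (0:ℝ) • (x - y) = y := by simp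
    have hcomp : HasDerivAt (fun t : ℝ => f (y + t • (x - y))) ⟪f' y, x - y⟫ 0 := by
      have := HasFDerivAt.comp_hasDerivAt (x := (0:ℝ)) (h0 ▸ hF) hline
      exact (by simpa using this : HasDerivAt (f ∘ fun t : ℝ => y + t • (x - y)) ⟪f' y, x - y⟫ 0)
    have hslope : Filter.Tendsto (slope (fun t : ℝ => f (y + t • (x - y))) 0)
        (nhdsWithin 0 (Set.Ioi 0)) (nhds ⟪f' y, x - y⟫) :=
      (hasDerivAt_iff_tendsto_slope.mp hcomp).mono_left
        (nhdsWithin_mono 0 (fun t ht => ne_of_gt ht))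
    have hle : ⟪f' y, x - y⟫ ≤ f x - f y := by
      refine le_of_tendsto hslope ?_
      filter_upwards [Ioo_mem_nhdsGT_of_mem (by norm_num : (0:ℝ) ∈ Set.Ico 0 1)] with t ht
      have hconv := hfconv.2 (Set.mem_univ y) (Set.mem_univ x)
        (by linarith [ht.2] : (0:ℝ) ≤ 1 - t) ht.1.le (by ring)
      have hxy : y + t • (x - y) = (1 - t) • y + t • x := by
        rw [smul_sub, sub_smul, one_smul]; abel
      rw [slope_def_field, sub_zero, div_le_iff₀ ht.1, hxy, h0]
      simp only [smul_eq_mul] at hconv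
      nlinarith [hconv]
    linarith
  -- key inequality at a point x with F(x) = Fx finite
  have key : ∀ (x : H) (Gx Fx : ℝ), g x = (Gx : EReal) → f x + Gx = Fx →
      L / 2 * (‖x - p‖ ^ 2 - ‖x - y‖ ^ 2) ≤ Fx - Fp := by
    intro x Gx Fx hgx hfx
    -- strong-convexity improved minimality of p
    have hpx : ‖x - p‖ ^ 2 = ‖p - y‖ ^ 2 - 2 * ⟪p - y, x - y⟫ + ‖x - y‖ ^ 2 := by
      rw [← norm_sub_sq_real, show p - y - (x - y) = p - x by abel, norm_sub_rev]
    have ht : ∀ t : ℝ, 0 < t → t < 1 →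
        ⟪f' y, p - y⟫ + L / 2 * ‖p - y‖ ^ 2 + Gp + L / 2 * (1 - t) * ‖x - p‖ ^ 2 ≤
          ⟪f' y, x - y⟫ + L / 2 * ‖x - y‖ ^ 2 + Gx := by
      intro t ht0 ht1
      set w := (1 - t) • p + t • x with hw
      have hwy : w - y = (1 - t) • (p - y) + t • (x - y) := by
        rw [hw]; module
      have hinner : ⟪f' y, w - y⟫ = (1 - t) * ⟪f' y, p - y⟫ + t * ⟪f' y, x - y⟫ := by
        rw [hwy, inner_add_right, real_inner_smul_right, real_inner_smul_right]
      have hnorm : ‖w - y‖ ^ 2 = (1 - t) ^ 2 * ‖p - y‖ ^ 2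
          + 2 * ((1 - t) * (t * ⟪p - y, x - y⟫)) + t ^ 2 * ‖x - y‖ ^ 2 := by
        rw [hwy, norm_add_sq_real, real_inner_smul_left, real_inner_smul_right,
          norm_smul, norm_smul, Real.norm_eq_abs, Real.norm_eq_abs, mul_pow, mul_pow,
          sq_abs, sq_abs]
      -- the EReal minimality turned into a real inequality
      have h2 := hgconv p x (1 - t) t (by linarith) ht0.le (by ring)
      rw [hGp, hgx] at h2
      have h2' : g w ≤ (((1 - t) * Gp + t * Gx : ℝ) : EReal) := by
        refine le_trans h2 (le_of_eq ?_)
        push_cast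
        rfl
      have h1 := hpmin w
      rw [hGp] at h1
      have h3 : ((f y + ⟪f' y, p - y⟫ + L / 2 * ‖p - y‖ ^ 2 : ℝ) : EReal) + (Gp : EReal) ≤
          ((f y + ⟪f' y, w - y⟫ + L / 2 * ‖w - y‖ ^ 2 : ℝ) : EReal) +
            (((1 - t) * Gp + t * Gx : ℝ) : EReal) :=
        le_trans h1 (add_le_add_right h2' _)
      have h4 : f y + ⟪f' y, p - y⟫ + L / 2 * ‖p - y‖ ^ 2 + Gp ≤
          f y + ⟪f' y, w - y⟫ + L / 2 * ‖w - y‖ ^ 2 + ((1 - t) * Gp + t * Gx) := by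
        exact_mod_cast h3
      rw [hinner, hnorm] at h4
      have hid : t * ((⟪f' y, p - y⟫ + L / 2 * ‖p - y‖ ^ 2 + Gp
            + L / 2 * (1 - t) * ‖x - p‖ ^ 2)
          - (⟪f' y, x - y⟫ + L / 2 * ‖x - y‖ ^ 2 + Gx)) =
          (f y + ⟪f' y, p - y⟫ + L / 2 * ‖p - y‖ ^ 2 + Gp)
          - (f y + ((1 - t) * ⟪f' y, p - y⟫ + t * ⟪f' y, x - y⟫)
            + L / 2 * ((1 - t) ^ 2 * ‖p - y‖ ^ 2
              + 2 * ((1 - t) * (t * ⟪p - y, x - y⟫)) + t ^ 2 * ‖x - y‖ ^ 2)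
            + ((1 - t) * Gp + t * Gx)) := by
        rw [hpx]; ring
      have h5 : t * ((⟪f' y, p - y⟫ + L / 2 * ‖p - y‖ ^ 2 + Gp
            + L / 2 * (1 - t) * ‖x - p‖ ^ 2)
          - (⟪f' y, x - y⟫ + L / 2 * ‖x - y‖ ^ 2 + Gx)) ≤ 0 := by
        rw [hid]; linarith [h4]
      by_contra hcon
      push_neg at hcon
      linarith [h5, mul_pos ht0 (sub_pos.mpr hcon)]
    have hsc : ⟪f' y, p - y⟫ + L / 2 * ‖p - y‖ ^ 2 + Gp + L / 2 * ‖x - p‖ ^ 2 ≤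
        ⟪f' y, x - y⟫ + L / 2 * ‖x - y‖ ^ 2 + Gx := by
      refine le_of_forall_sub_le ?_
      intro ε hε
      set c := L / 2 * ‖x - p‖ ^ 2 with hc
      have hc0 : 0 ≤ c := by positivity
      set t := min (1/2 : ℝ) (ε / (c + 1)) with htdef
      have ht0 : 0 < t := lt_min (by norm_num) (by positivity)
      have ht1 : t < 1 := lt_of_le_of_lt (min_le_left _ _) (by norm_num)
      have hmain := ht t ht0 ht1
      have htc : c * t ≤ ε := by
        have h5 : c * t ≤ c * (ε / (c + 1)) :=
          mul_le_mul_of_nonneg_left (min_le_right _ _) hc0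
        have h6 : c * (ε / (c + 1)) ≤ ε := by
          rw [mul_comm, div_mul_eq_mul_div, div_le_iff₀ (by positivity : (0:ℝ) < c + 1)]
          nlinarith
        linarith
      have h7 : L / 2 * (1 - t) * ‖x - p‖ ^ 2 = c - c * t := by rw [hc]; ring
      linarith [hmain, htc, h7]
    have h3 : f p + Gp ≤ f y + ⟪f' y, p - y⟫ + L / 2 * ‖p - y‖ ^ 2 + Gp := by
      have h := hFQ
      rw [hGp] at h
      exact_mod_cast h
    have h4 := grad x
    linarith [hsc, h3, h4, hGp', hfx]
  have keyk := key xk Gk Fxk hGk hGk'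
  have keyt := key xt Gt Fxt hGt hGt'
  -- vector identities
  set z := (δ - 1) • xk + xt with hz
  have idu : ∀ u : H, δ * (δ - 1) * ‖xk - u‖ ^ 2 + δ * ‖xt - u‖ ^ 2 =
      ‖δ • u - z‖ ^ 2 + (δ * (δ - 1) * ‖xk‖ ^ 2 + δ * ‖xt‖ ^ 2 - ‖z‖ ^ 2) := by
    intro u
    have e1 : ‖δ • u - z‖ ^ 2 = δ ^ 2 * ‖u‖ ^ 2
        - 2 * (δ * ((δ - 1) * ⟪u, xk⟫ + ⟪u, xt⟫)) + ‖z‖ ^ 2 := by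
      rw [norm_sub_sq_real, real_inner_smul_left, hz, inner_add_right,
        real_inner_smul_right, norm_smul, Real.norm_eq_abs, mul_pow, sq_abs]
    have e2 : ‖xk - u‖ ^ 2 = ‖xk‖ ^ 2 - 2 * ⟪u, xk⟫ + ‖u‖ ^ 2 := by
      rw [norm_sub_sq_real, real_inner_comm]
    have e3 : ‖xt - u‖ ^ 2 = ‖xt‖ ^ 2 - 2 * ⟪u, xt⟫ + ‖u‖ ^ 2 := by
      rw [norm_sub_sq_real, real_inner_comm]
    rw [e1, e2, e3]; ring
  have idp := idu p
  have idy := idu y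
  -- perturbation : relate ‖δ•p - z‖ to ‖δ•x' - z‖
  set M := ‖x' - ((δ - 1) / δ) • xk - (1 / δ) • xt‖ with hM
  have hA : δ • x' - z = δ • (x' - ((δ - 1) / δ) • xk - (1 / δ) • xt) := by
    rw [smul_sub, smul_sub, smul_smul, smul_smul,
      mul_div_cancel₀ _ (ne_of_gt hδ0), mul_one_div, div_self (ne_of_gt hδ0), one_smul, hz]
    abel
  have hnA : ‖δ • x' - z‖ = δ * M := by
    rw [hA, norm_smul, Real.norm_eq_abs, abs_of_pos hδ0]
  have hpz : ‖δ • p - z‖ ^ 2 ≥ ‖δ • x' - z‖ ^ 2 - 2 * δ ^ 2 * ‖e‖ * M := by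
    have hpe : δ • p - z = (δ • x' - z) - δ • e := by
      rw [hx', smul_add]; abel
    have hcs : ⟪δ • x' - z, δ • e⟫ ≤ ‖δ • x' - z‖ * ‖δ • e‖ := real_inner_le_norm _ _
    have hne : ‖δ • e‖ = δ * ‖e‖ := by
      rw [norm_smul, Real.norm_eq_abs, abs_of_pos hδ0]
    have hexp := norm_sub_sq_real (δ • x' - z) (δ • e)
    rw [← hpe, hne] at hexp
    rw [hne, hnA] at hcs
    linarith [hexp, hcs, sq_nonneg (δ * ‖e‖)]
  -- final assembly
  have hcomb : ‖δ • p - z‖ ^ 2 - ‖δ • y - z‖ ^ 2 ≤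
      (2 / L) * (δ * (δ - 1) * (Fxk - Fp) + δ * (Fxt - Fp)) := by
    have hδδ : 0 ≤ δ * (δ - 1) := mul_nonneg hδ0.le (by linarith)
    have h1 : δ * (δ - 1) * (L / 2 * (‖xk - p‖ ^ 2 - ‖xk - y‖ ^ 2)) ≤
        δ * (δ - 1) * (Fxk - Fp) := mul_le_mul_of_nonneg_left keyk hδδ
    have h2 : δ * (L / 2 * (‖xt - p‖ ^ 2 - ‖xt - y‖ ^ 2)) ≤
        δ * (Fxt - Fp) := mul_le_mul_of_nonneg_left keyt hδ0.le
    have hLpos : 0 < 2 / L := by positivity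
    have h3 : ‖δ • p - z‖ ^ 2 - ‖δ • y - z‖ ^ 2 =
        δ * (δ - 1) * (‖xk - p‖ ^ 2 - ‖xk - y‖ ^ 2) + δ * (‖xt - p‖ ^ 2 - ‖xt - y‖ ^ 2) := by
      linarith [idp, idy]
    rw [h3]
    have h4 : δ * (δ - 1) * (‖xk - p‖ ^ 2 - ‖xk - y‖ ^ 2)
        + δ * (‖xt - p‖ ^ 2 - ‖xt - y‖ ^ 2) ≤
        (2 / L) * (δ * (δ - 1) * (L / 2 * (‖xk - p‖ ^ 2 - ‖xk - y‖ ^ 2))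
          + δ * (L / 2 * (‖xt - p‖ ^ 2 - ‖xt - y‖ ^ 2))) := by
      have h2L : 2 / L * (L / 2) = 1 := by field_simp
      rw [show (2 / L) * (δ * (δ - 1) * (L / 2 * (‖xk - p‖ ^ 2 - ‖xk - y‖ ^ 2))
          + δ * (L / 2 * (‖xt - p‖ ^ 2 - ‖xt - y‖ ^ 2))) =
          (2 / L * (L / 2)) * (δ * (δ - 1) * (‖xk - p‖ ^ 2 - ‖xk - y‖ ^ 2)
            + δ * (‖xt - p‖ ^ 2 - ‖xt - y‖ ^ 2)) from by ring,
        h2L, one_mul]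
    refine le_trans h4 ?_
    have := add_le_add h1 h2
    exact mul_le_mul_of_nonneg_left this hLpos.le
  have hFpe : Fx' - Λ * ‖e‖ ≤ Fp := by linarith
  have hfinal : (2 / L) * (δ * (δ - 1) * (Fxk - Fp) + δ * (Fxt - Fp)) ≤
      (2 / L) * (δ * (δ - 1) * (Fxk - Fxt) - δ ^ 2 * (Fx' - Fxt)) +
        (2 / L) * (δ ^ 2 * (Λ * ‖e‖)) := by
    have hδ2 : (0:ℝ) ≤ δ ^ 2 := sq_nonneg δ
    have h5 : δ * (δ - 1) * (Fxk - Fp) + δ * (Fxt - Fp) =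
        δ * (δ - 1) * (Fxk - Fxt) - δ ^ 2 * (Fp - Fxt) := by ring
    have h6 : - δ ^ 2 * (Fp - Fxt) ≤ - δ ^ 2 * (Fx' - Fxt) + δ ^ 2 * (Λ * ‖e‖) := by
      linarith [mul_le_mul_of_nonneg_left hFpe hδ2]
    have hLpos : (0:ℝ) ≤ 2 / L := by positivity
    rw [← mul_add]
    refine mul_le_mul_of_nonneg_left ?_ hLpos
    linarith [h5, h6]
  have hsplit : 2 * δ ^ 2 * ‖e‖ * (Λ / L + M) =
      (2 / L) * (δ ^ 2 * (Λ * ‖e‖)) + 2 * δ ^ 2 * ‖e‖ * M := by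
    field_simp
  rw [ge_iff_le]
  linarith [hpz, hcomb, hfinal, hsplit]
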